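/- Let n ≥ 1, let M be a positive semidefinite complex matrix indexed by (Fin n × Fin n), and suppose 0 ≤ s is such that (e ⊗ f)ᴴ M (e ⊗ f) ≤ s for all unit vectors e, f ∈ ℂⁿ. If additionally n = 2^p for some p : ℕ, then for every unit vector ψ : Fin n × Fin n → ℂ one has ψᴴ M ψ ≤ 2^{2p} · s. -/

import Mathlib

open Matrix
open scoped ComplexOrder

/-- **Lemma (clonable-single-proof, quantitative core).** If `M` is a positive semidefinite
`n² × n²` complex matrix whose quadratic form on all product unit vectors `e ⊗ f` is at
most `s`, and `n = 2^p`, then for every unit vector `ψ : Fin n × Fin n → ℂ` one has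
`ψᴴ M ψ ≤ 2^(2p) · s`. -/
theorem psd_product_bound_entangled_blowup
    (n : ℕ) (hn : 1 ≤ n) (p : ℕ) (hnp : n = 2 ^ p)
    (M : Matrix (Fin n × Fin n) (Fin n × Fin n) ℂ) (hM : M.PosSemidef)
    (s : ℝ) (hs : 0 ≤ s)
    (hprod : ∀ e f : Fin n → ℂ,
      (∑ i, ‖e i‖ ^ 2) = 1 → (∑ i, ‖f i‖ ^ 2) = 1 →
      (star (fun q : Fin n × Fin n => e q.1 * f q.2) ⬝ᵥ
        M *ᵥ (fun q : Fin n × Fin n => e q.1 * f q.2)).re ≤ s) :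
    ∀ ψ : Fin n × Fin n → ℂ, (∑ q, ‖ψ q‖ ^ 2) = 1 →
      (star ψ ⬝ᵥ M *ᵥ ψ).re ≤ (2 : ℝ) ^ (2 * p) * s := by
  -- Step 1: every entry of `M` is bounded in norm by `s`.
  have hent : ∀ q q' : Fin n × Fin n, ‖M q q'‖ ≤ s := by
    obtain ⟨B, rfl⟩ : ∃ B : Matrix (Fin n × Fin n) (Fin n × Fin n) ℂ, M = Bᴴ * B := by
      open scoped MatrixOrder in
      obtain ⟨X, hX, -, rfl⟩ := CFC.exists_sqrt_of_isSelfAdjoint_of_quasispectrumRestricts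
        hM.isHermitian (QuasispectrumRestricts.nnreal_of_nonneg hM.nonneg)
      exact ⟨X, by rw [← Matrix.star_eq_conjTranspose, hX.star_eq]⟩
    set v : (Fin n × Fin n) → EuclideanSpace ℂ (Fin n × Fin n) := fun q => WithLp.toLp 2 (fun k => B k q) with hv
    have hinner : ∀ q q', (Bᴴ * B) q q' = inner ℂ (v q) (v q') := by
      intro q q'
      simp [Matrix.mul_apply, PiLp.inner_apply, inner, v, Matrix.conjTranspose_apply, mul_comm]
    have hdiag : ∀ q : Fin n × Fin n, ‖v q‖ ^ 2 ≤ s := by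
      intro q
      have h1 : (∑ i, ‖(Pi.single q.1 1 : Fin n → ℂ) i‖ ^ 2) = 1 := by
        simp [Pi.single_apply, apply_ite]
      have h2 : (∑ i, ‖(Pi.single q.2 1 : Fin n → ℂ) i‖ ^ 2) = 1 := by
        simp [Pi.single_apply, apply_ite]
      have := hprod _ _ h1 h2
      have hfun : (fun r : Fin n × Fin n =>
          (Pi.single q.1 1 : Fin n → ℂ) r.1 * (Pi.single q.2 1 : Fin n → ℂ) r.2)
          = Pi.single q 1 := by
        funext r
        simp [Pi.single_apply, Prod.ext_iff, ite_and]
        aesop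
      rw [hfun] at this
      have hquad : (star (Pi.single q 1 : Fin n × Fin n → ℂ) ⬝ᵥ
          (Bᴴ * B) *ᵥ (Pi.single q 1)) = (Bᴴ * B) q q := by
        simp [dotProduct, mulVec, Pi.single_apply, apply_ite]
      rw [hquad, hinner q q] at this
      calc ‖v q‖ ^ 2 = (inner ℂ (v q) (v q) : ℂ).re := by
            rw [← inner_self_eq_norm_sq (𝕜 := ℂ)]; rfl
        _ ≤ s := this
    intro q q'
    rw [hinner]
    calc ‖(inner ℂ (v q) (v q') : ℂ)‖ ≤ ‖v q‖ * ‖v q'‖ := norm_inner_le_norm _ _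
      _ ≤ Real.sqrt s * Real.sqrt s := by
          gcongr <;> [skip; skip] <;>
          · rw [← Real.sqrt_sq (norm_nonneg _)]
            exact Real.sqrt_le_sqrt (by simpa using hdiag _)
      _ = s := Real.mul_self_sqrt hs
  -- Step 2: conclude by the triangle inequality and Cauchy–Schwarz on sums.
  intro ψ hψ
  have key : (star ψ ⬝ᵥ M *ᵥ ψ).re ≤ s * (∑ q, ‖ψ q‖) ^ 2 := by
    have h1 : (star ψ ⬝ᵥ M *ᵥ ψ).re ≤ ‖star ψ ⬝ᵥ M *ᵥ ψ‖ := by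
      have := Complex.abs_re_le_norm (star ψ ⬝ᵥ M *ᵥ ψ)
      exact (le_abs_self _).trans this
    have h2 : ‖star ψ ⬝ᵥ M *ᵥ ψ‖ ≤ ∑ q, ∑ q', ‖ψ q‖ * (‖M q q'‖ * ‖ψ q'‖) := by
      calc ‖star ψ ⬝ᵥ M *ᵥ ψ‖ = ‖∑ q, ∑ q', star (ψ q) * (M q q' * ψ q')‖ := by
            simp [dotProduct, mulVec, Finset.mul_sum]
        _ ≤ ∑ q, ∑ q', ‖star (ψ q) * (M q q' * ψ q')‖ := by
            exact (norm_sum_le _ _).trans (Finset.sum_le_sum fun q _ => norm_sum_le _ _)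
        _ = ∑ q, ∑ q', ‖ψ q‖ * (‖M q q'‖ * ‖ψ q'‖) := by
            simp [norm_mul]
    have h3 : ∑ q, ∑ q', ‖ψ q‖ * (‖M q q'‖ * ‖ψ q'‖)
        ≤ ∑ q : Fin n × Fin n, ∑ q' : Fin n × Fin n, ‖ψ q‖ * (s * ‖ψ q'‖) := by
      refine Finset.sum_le_sum fun q _ => Finset.sum_le_sum fun q' _ => ?_
      exact mul_le_mul_of_nonneg_left
        (mul_le_mul_of_nonneg_right (hent q q') (norm_nonneg _)) (norm_nonneg _)
    have h4 : ∑ q : Fin n × Fin n, ∑ q' : Fin n × Fin n, ‖ψ q‖ * (s * ‖ψ q'‖)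
        = s * (∑ q, ‖ψ q‖) ^ 2 := by
      rw [sq, Finset.sum_mul_sum, Finset.mul_sum]
      refine Finset.sum_congr rfl fun q _ => ?_
      rw [Finset.mul_sum]
      exact Finset.sum_congr rfl fun q' _ => by ring
    linarith
  have cauchy : (∑ q, ‖ψ q‖) ^ 2 ≤ (2:ℝ) ^ (2 * p) := by
    have := Finset.sum_mul_sq_le_sq_mul_sq Finset.univ (fun _ : Fin n × Fin n => (1:ℝ))
      (fun q => ‖ψ q‖)
    simp only [one_mul, one_pow] at this
    have hcard : (∑ _q : Fin n × Fin n, (1:ℝ)) = (n:ℝ)^2 := by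
      simp [sq]
    rw [hcard, hψ, mul_one] at this
    calc (∑ q, ‖ψ q‖) ^ 2 ≤ (n:ℝ)^2 := this
      _ = (2:ℝ) ^ (2 * p) := by
          rw [hnp]; push_cast; rw [← pow_mul, mul_comm]
  calc (star ψ ⬝ᵥ M *ᵥ ψ).re ≤ s * (∑ q, ‖ψ q‖) ^ 2 := key
    _ ≤ s * (2:ℝ) ^ (2 * p) := mul_le_mul_of_nonneg_left cauchy hs
    _ = (2 : ℝ) ^ (2 * p) * s := mul_comm _ _
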